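/- Let G be a graph which has partial self-isomorphisms and let n be an optimal integer. Then the set {k ∈ (n, 2n] : k is optimal} is nonempty. -/
import Mathlib


open Set Filter

namespace SepProfile

variable {V : Type*}

/-- Edge boundary of a vertex set: pairs (a,b) with a ∈ A, b ∉ A, a ~ b. -/
def ebd (G : SimpleGraph V) (A : Set V) : Set (V × V) :=
  {p | G.Adj p.1 p.2 ∧ p.1 ∈ A ∧ p.2 ∉ A}

/-- Isoperimetric ratio |∂A|/|A|. -/
noncomputable def ratio (G : SimpleGraph V) (A : Set V) : ℝ :=
  ((ebd G A).ncard : ℝ) / (A.ncard : ℝ)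

/-- Isoperimetric profile Λ(n). -/
noncomputable def isop (G : SimpleGraph V) (n : ℕ) : ℝ :=
  sInf {x | ∃ A : Set V, A.Finite ∧ A.Nonempty ∧ A.ncard ≤ n ∧ x = ratio G A}

/-- Boundary of A within F (edges of the induced subgraph on F leaving A). -/
def inbd (G : SimpleGraph V) (F A : Set V) : Set (V × V) :=
  {p | G.Adj p.1 p.2 ∧ p.1 ∈ A ∧ p.2 ∈ F \ A}

/-- Cheeger constant of the subgraph induced on F. -/
noncomputable def cheeger (G : SimpleGraph V) (F : Set V) : ℝ :=
  sInf {x | ∃ A : Set V, A ⊆ F ∧ A.Nonempty ∧ 2 * A.ncard ≤ F.ncard ∧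
    x = ((inbd G F A).ncard : ℝ) / (A.ncard : ℝ)}

/-- Separation profile Sep(n) = sup_{|F| ≤ n} |F|·h(F). -/
noncomputable def sep (G : SimpleGraph V) (n : ℕ) : ℝ :=
  sSup {x | ∃ F : Set V, F.Finite ∧ F.ncard ≤ n ∧ x = (F.ncard : ℝ) * cheeger G F}

/-- A finite set is optimal if it realizes the isoperimetric profile. -/
def Optimal (G : SimpleGraph V) (F : Set V) : Prop :=
  F.Finite ∧ F.Nonempty ∧ ratio G F = isop G F.ncard

/-- An integer is optimal if some optimal set has that cardinality. -/
def OptimalInt (G : SimpleGraph V) (n : ℕ) : Prop :=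
  ∃ F : Set V, Optimal G F ∧ F.ncard = n

/-- Ball of radius n around v for the graph metric. -/
def ball (G : SimpleGraph V) (v : V) (n : ℕ) : Set V :=
  {u | G.Reachable v u ∧ G.dist v u ≤ n}

/-- All degrees bounded by D. -/
def DegLE (G : SimpleGraph V) (D : ℕ) : Prop :=
  ∀ v, (G.neighborSet v).ncard ≤ D

/-- Amenability: the isoperimetric profile tends to 0. -/
def Amenable (G : SimpleGraph V) : Prop :=
  Tendsto (fun n => isop G n) atTop (nhds 0)

/-- F together with its outer vertex neighbourhood. -/
def nbh (G : SimpleGraph V) (F : Set V) : Set V :=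
  F ∪ {b | ∃ a ∈ F, G.Adj a b}

/-- Partial self-isomorphisms: every finite F has a disjoint isomorphic copy
(together with its boundary neighbourhood). -/
def HasPSI (G : SimpleGraph V) : Prop :=
  ∀ F : Set V, F.Finite →
    ∃ F' : Set V, F'.Finite ∧ Disjoint F F' ∧
      ∃ e : G.induce (nbh G F) ≃g G.induce (nbh G F'),
        ∀ x : nbh G F, (x : V) ∈ F ↔ ((e x : V) ∈ F')

/-- δ-geometric decay function p_f^δ(x) = inf {y > 0 : f(y) ≤ δ·f(x)}. -/
noncomputable def gdecay (f : ℝ → ℝ) (δ x : ℝ) : ℝ :=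
  sInf {y | 0 < y ∧ f y ≤ δ * f x}

end SepProfile

open SepProfile Real

namespace SepProfile
variable {V : Type*}

lemma ratio_nonneg (G : SimpleGraph V) (A : Set V) : 0 ≤ ratio G A :=
  div_nonneg (Nat.cast_nonneg _) (Nat.cast_nonneg _)

lemma isop_bddBelow (G : SimpleGraph V) (m : ℕ) :
    BddBelow {x | ∃ A : Set V, A.Finite ∧ A.Nonempty ∧ A.ncard ≤ m ∧ x = ratio G A} :=
  ⟨0, fun _ ⟨A, _, _, _, hx⟩ => hx ▸ ratio_nonneg G A⟩

lemma isop_le (G : SimpleGraph V) {A : Set V} {m : ℕ} (h1 : A.Finite) (h2 : A.Nonempty)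
    (h3 : A.ncard ≤ m) : isop G m ≤ ratio G A :=
  csInf_le (isop_bddBelow G m) ⟨A, h1, h2, h3, rfl⟩

lemma isop_mono (G : SimpleGraph V) {m m' : ℕ} (h : m ≤ m') {A0 : Set V}
    (h1 : A0.Finite) (h2 : A0.Nonempty) (h3 : A0.ncard ≤ m) : isop G m' ≤ isop G m :=
  csInf_le_csInf (isop_bddBelow G m') ⟨ratio G A0, A0, h1, h2, h3, rfl⟩
    (fun _ ⟨A, k1, k2, k3, k4⟩ => ⟨A, k1, k2, k3.trans h, k4⟩)

lemma isop_attained (G : SimpleGraph V) {m : ℕ} {A0 : Set V}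
    (h1 : A0.Finite) (h2 : A0.Nonempty) (h3 : A0.ncard ≤ m) :
    ∃ A : Set V, A.Finite ∧ A.Nonempty ∧ A.ncard ≤ m ∧ ratio G A = isop G m := by
  set S := {x | ∃ A : Set V, A.Finite ∧ A.Nonempty ∧ A.ncard ≤ m ∧ x = ratio G A} with hS
  set x0 := ratio G A0 with hx0
  have hx0S : x0 ∈ S := ⟨A0, h1, h2, h3, rfl⟩
  have hx0nn : 0 ≤ x0 := ratio_nonneg G A0
  set T := S ∩ Set.Iic x0 with hT
  have hTne : T.Nonempty := ⟨x0, hx0S, le_refl x0⟩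
  set N := ⌈x0 * m⌉₊ with hN
  have hTfin : T.Finite := by
    apply Set.Finite.subset (((Set.finite_Iic N).prod (Set.finite_Iic m)).image
      (fun pq : ℕ × ℕ => (pq.1 : ℝ) / (pq.2 : ℝ)))
    rintro x ⟨⟨A, hA1, hA2, hA3, rfl⟩, hxle⟩
    refine ⟨((ebd G A).ncard, A.ncard), ⟨?_, hA3⟩, rfl⟩
    have hq : 0 < A.ncard := (Set.ncard_pos hA1).mpr hA2
    have hqr : (0:ℝ) < A.ncard := by exact_mod_cast hq
    have hle1 : ((ebd G A).ncard : ℝ) ≤ x0 * A.ncard := by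
      have h' : ((ebd G A).ncard : ℝ) / (A.ncard : ℝ) ≤ x0 := hxle
      rw [div_le_iff₀ hqr] at h'
      exact h'
    have h2' : ((ebd G A).ncard : ℝ) ≤ x0 * m := by
      refine hle1.trans (mul_le_mul_of_nonneg_left ?_ hx0nn)
      exact_mod_cast hA3
    exact_mod_cast h2'.trans (Nat.le_ceil _)
  obtain ⟨t, htT, htmin⟩ := Set.exists_min_image T id hTfin hTne
  have hts : t = sInf S := by
    refine le_antisymm (le_csInf ⟨x0, hx0S⟩ ?_) (csInf_le (isop_bddBelow G m) htT.1)
    intro s hs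
    by_cases h : s ≤ x0
    · exact htmin s ⟨hs, h⟩
    · exact htT.2.trans (le_of_not_ge h)
  obtain ⟨A, hA1, hA2, hA3, hA4⟩ := htT.1
  exact ⟨A, hA1, hA2, hA3, hA4 ▸ hts⟩

lemma mem_nbh_left (G : SimpleGraph V) {F : Set V} {x : V} (h : x ∈ F) : x ∈ nbh G F :=
  Or.inl h

lemma mem_nbh_right (G : SimpleGraph V) {F : Set V} {a b : V} (ha : a ∈ F) (h : G.Adj a b) :
    b ∈ nbh G F := Or.inr ⟨a, ha, h⟩

section
variable (G : SimpleGraph V) {F F' : Set V}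
  (e : G.induce (nbh G F) ≃g G.induce (nbh G F'))
  (he : ∀ x : nbh G F, (x : V) ∈ F ↔ ((e x : V) ∈ F'))

include he in
lemma he_symm : ∀ y : nbh G F', ((e.symm y : V) ∈ F ↔ (y : V) ∈ F') := by
  intro y
  have := he (e.symm y)
  rwa [e.apply_symm_apply] at this

noncomputable def eqF : F ≃ F' where
  toFun x := ⟨(e ⟨x, mem_nbh_left G x.2⟩ : V), (he ⟨x, mem_nbh_left G x.2⟩).mp x.2⟩
  invFun y := ⟨(e.symm ⟨y, mem_nbh_left G y.2⟩ : V),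
    (he_symm G e he ⟨y, mem_nbh_left G y.2⟩).mpr y.2⟩
  left_inv x := by
    apply Subtype.ext
    simp
  right_inv y := by
    apply Subtype.ext
    simp

noncomputable def eqEbd : ebd G F ≃ ebd G F' where
  toFun p :=
    ⟨((e ⟨p.val.1, mem_nbh_left G p.2.2.1⟩ : V),
      (e ⟨p.val.2, mem_nbh_right G p.2.2.1 p.2.1⟩ : V)),
      e.map_adj_iff.mpr p.2.1,
      (he _).mp p.2.2.1,
      fun h => p.2.2.2 ((he _).mpr h)⟩
  invFun q :=
    ⟨((e.symm ⟨q.val.1, mem_nbh_left G q.2.2.1⟩ : V),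
      (e.symm ⟨q.val.2, mem_nbh_right G q.2.2.1 q.2.1⟩ : V)),
      e.symm.map_adj_iff.mpr q.2.1,
      (he_symm G e he _).mpr q.2.2.1,
      fun h => q.2.2.2 ((he_symm G e he _).mp h)⟩
  left_inv p := by
    apply Subtype.ext
    apply Prod.ext
    · exact congrArg Subtype.val (e.symm_apply_apply _)
    · exact congrArg Subtype.val (e.symm_apply_apply _)
  right_inv q := by
    apply Subtype.ext
    apply Prod.ext
    · exact congrArg Subtype.val (e.apply_symm_apply _)
    · exact congrArg Subtype.val (e.apply_symm_apply _)

end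
end SepProfile

theorem stmt2 {V : Type*} (G : SimpleGraph V) (hPSI : HasPSI G) (n : ℕ)
    (hn : OptimalInt G n) :
    ∃ k, n < k ∧ k ≤ 2 * n ∧ OptimalInt G k := by
  obtain ⟨F, ⟨hFfin, hFne, hFopt⟩, hFn⟩ := hn
  have hn1 : 1 ≤ n := by
    have := (Set.ncard_pos hFfin).mpr hFne
    omega
  obtain ⟨F', hF'fin, hdisj, e, he⟩ := hPSI F hFfin
  have hF'card : F'.ncard = n := by
    rw [← hFn, ← Nat.card_coe_set_eq, ← Nat.card_coe_set_eq]
    exact (Nat.card_congr (eqF G e he)).symm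
  have hF'ne : F'.Nonempty := Set.nonempty_of_ncard_ne_zero (by omega)
  set U := F ∪ F' with hU
  have hUfin : U.Finite := hFfin.union hF'fin
  have hUne : U.Nonempty := hFne.mono Set.subset_union_left
  have hUcard : U.ncard = 2 * n := by
    rw [hU, Set.ncard_union_eq hdisj hFfin hF'fin, hFn, hF'card]; ring
  -- key inequality
  have hkey : ratio G U ≤ ratio G F := by
    by_cases hb : (ebd G F).Finite
    · have hb' : (ebd G F').Finite := by
        rw [← Set.finite_coe_iff] at hb ⊢
        exact Finite.of_equiv _ (eqEbd G e he)
      have hcard' : (ebd G F').ncard = (ebd G F).ncard := by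
        rw [← Nat.card_coe_set_eq, ← Nat.card_coe_set_eq]
        exact (Nat.card_congr (eqEbd G e he)).symm
      have hsub : ebd G U ⊆ ebd G F ∪ ebd G F' := by
        rintro ⟨a, b⟩ ⟨hadj, ha, hb2⟩
        rcases ha with ha | ha
        · exact Or.inl ⟨hadj, ha, fun h => hb2 (Or.inl h)⟩
        · exact Or.inr ⟨hadj, ha, fun h => hb2 (Or.inr h)⟩
      have hcardU : (ebd G U).ncard ≤ 2 * (ebd G F).ncard := by
        have := (Set.ncard_le_ncard hsub (hb.union hb')).trans
          (Set.ncard_union_le _ _)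
        omega
      have hnpos : (0:ℝ) < n := by exact_mod_cast hn1
      rw [ratio, ratio, hUcard, hFn]
      rw [div_le_div_iff₀ (by positivity) hnpos]
      have h1 : ((ebd G U).ncard : ℝ) ≤ 2 * (ebd G F).ncard := by exact_mod_cast hcardU
      push_cast
      nlinarith [Nat.cast_nonneg (α := ℝ) (ebd G F).ncard, hnpos]
    · have hsub : ebd G F \ (F ×ˢ F') ⊆ ebd G U := by
        rintro ⟨a, b⟩ ⟨⟨hadj, ha, hb2⟩, hnp⟩
        refine ⟨hadj, Or.inl ha, ?_⟩
        rintro (h | h)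
        · exact hb2 h
        · exact hnp ⟨ha, h⟩
      have hbinf : (ebd G F).Infinite := hb
      have hUinf : (ebd G U).Infinite :=
        Set.Infinite.mono hsub (hbinf.diff (hFfin.prod hF'fin))
      rw [ratio, hUinf.ncard]
      simpa using ratio_nonneg G F
  have h2 : ratio G F = isop G n := hFn ▸ hFopt
  have h1 : isop G (2 * n) ≤ ratio G U := isop_le G hUfin hUne (le_of_eq hUcard)
  obtain ⟨A, hA1, hA2, hA3, hA4⟩ := isop_attained G hFfin hFne
    (show F.ncard ≤ 2 * n by omega)
  by_cases hcase : n < A.ncard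
  · refine ⟨A.ncard, hcase, hA3, A, ⟨hA1, hA2, ?_⟩, rfl⟩
    have hle1 : isop G A.ncard ≤ ratio G A := isop_le G hA1 hA2 le_rfl
    have hle2 : isop G (2 * n) ≤ isop G A.ncard := isop_mono G hA3 hA1 hA2 le_rfl
    linarith [hA4]
  · have e1 : isop G n ≤ ratio G A := isop_le G hA1 hA2 (not_lt.mp hcase)
    refine ⟨2 * n, by omega, le_rfl, U, ⟨hUfin, hUne, ?_⟩, hUcard⟩
    rw [hUcard]
    linarith [hA4, h1, hkey, h2]
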